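/- Suppose $F_1, F_2$ are Hilbert–Schmidt integral operators on $L^2((-\infty,0])$ with continuous square-integrable kernels $f_1(y,\xi;x)$, $f_2(\xi,z;x)$ depending on a real parameter $x$, and $H_1, H_2$ are Hankel operators with parameter $x$, i.e. $(H_i\phi)(y;x) = \int_{-\infty}^0 h_i(y+\xi+x)\phi(\xi)\,d\xi$ with $h_i$ continuously differentiable and the relevant integrals absolutely convergent. Then the kernel of $F_1\,\partial_x(H_1 H_2)\,F_2$ factorizes as $[F_1\partial_x(H_1H_2)F_2](y,z;x) = [F_1 H_1](y,0;x)\,[H_2 F_2](0,z;x)$, where $[\,\cdot\,]$ denotes the integral kernel of an operator. -/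

import Mathlib

open MeasureTheory Filter

lemma poppe_aux_hasDerivAt (h1 h2 : ℝ → ℝ) (hh1 : ContDiff ℝ 1 h1) (hh2 : ContDiff ℝ 1 h2)
    (a b t : ℝ) :
    HasDerivAt (fun u => h1 (a + u) * h2 (b + u))
      (deriv h1 (a + t) * h2 (b + t) + h1 (a + t) * deriv h2 (b + t)) t := by
  have d1 : HasDerivAt (fun u => h1 (a + u)) (deriv h1 (a + t)) t := by
    have h := ((hh1.differentiable one_ne_zero) (a + t)).hasDerivAt.comp t
      ((hasDerivAt_id t).const_add a)
    simpa [Function.comp_def] using h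
  have d2 : HasDerivAt (fun u => h2 (b + u)) (deriv h2 (b + t)) t := by
    have h := ((hh2.differentiable one_ne_zero) (b + t)).hasDerivAt.comp t
      ((hasDerivAt_id t).const_add b)
    simpa [Function.comp_def] using h
  exact d1.mul d2

/-- Pöppe's kernel product rule.  Let `F₁, F₂` be Hilbert–Schmidt integral operators
on `L²((-∞,0])` with continuous square-integrable kernels `f₁(y,ξ;x)`, `f₂(ξ,z;x)`
depending on a real parameter `x`, and let `H₁, H₂` be Hankel operators with
parameter `x`, with kernels `h₁(y+ξ+x)`, `h₂(y+ξ+x)`, the `hᵢ` continuously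
differentiable (decaying at `-∞`) and the relevant integrals absolutely convergent.
Then the kernel of `F₁ ∂ₓ(H₁H₂) F₂`, given by the triple iterated integral, factorizes
as `[F₁H₁](y,0;x) [H₂F₂](0,z;x)`. -/
theorem poppe_kernel_product_rule
    (f1 f2 : ℝ → ℝ → ℝ → ℝ) (h1 h2 : ℝ → ℝ) (x y z : ℝ)
    (hf1c : Continuous fun p : ℝ × ℝ × ℝ => f1 p.1 p.2.1 p.2.2)
    (hf2c : Continuous fun p : ℝ × ℝ × ℝ => f2 p.1 p.2.1 p.2.2)
    (hf1L2 : MemLp (fun p : ℝ × ℝ => f1 p.1 p.2 x) 2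
      (volume.restrict (Set.Iic 0 ×ˢ Set.Iic 0)))
    (hf2L2 : MemLp (fun p : ℝ × ℝ => f2 p.1 p.2 x) 2
      (volume.restrict (Set.Iic 0 ×ˢ Set.Iic 0)))
    (hh1 : ContDiff ℝ 1 h1) (hh2 : ContDiff ℝ 1 h2)
    (hh1L2 : MemLp h1 2 volume) (hh2L2 : MemLp h2 2 volume)
    (hdecay1 : Tendsto h1 atBot (nhds 0)) (hdecay2 : Tendsto h2 atBot (nhds 0))
    (hint1 : IntegrableOn (fun ξ => f1 y ξ x * h1 (ξ + x)) (Set.Iic 0))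
    (hint2 : IntegrableOn (fun ξ => h2 (ξ + x) * f2 ξ z x) (Set.Iic 0))
    (hint3 : IntegrableOn
      (fun ξ : ℝ × ℝ × ℝ => f1 y ξ.1 x *
        deriv (fun t => h1 (ξ.1 + ξ.2.1 + t) * h2 (ξ.2.1 + ξ.2.2 + t)) x *
        f2 ξ.2.2 z x)
      (Set.Iic 0 ×ˢ Set.Iic 0 ×ˢ Set.Iic 0)) :
    (∫ ξ1 in Set.Iic (0:ℝ), ∫ ξ2 in Set.Iic (0:ℝ), ∫ ξ3 in Set.Iic (0:ℝ),
        f1 y ξ1 x *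
          deriv (fun t => h1 (ξ1 + ξ2 + t) * h2 (ξ2 + ξ3 + t)) x *
          f2 ξ3 z x)
      = (∫ ξ in Set.Iic (0:ℝ), f1 y ξ x * h1 (ξ + x)) *
        (∫ ξ in Set.Iic (0:ℝ), h2 (ξ + x) * f2 ξ z x) := by
  set ρ : Measure ℝ := volume.restrict (Set.Iic 0) with hρ
  set g : ℝ → ℝ → ℝ → ℝ := fun ξ1 ξ2 ξ3 =>
    f1 y ξ1 x * deriv (fun t => h1 (ξ1 + ξ2 + t) * h2 (ξ2 + ξ3 + t)) x * f2 ξ3 z x with hg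
  set C : ℝ := ∫ ξ in Set.Iic (0:ℝ), h2 (ξ + x) * f2 ξ z x with hC
  -- integrability w.r.t. the product of restricted measures
  have h3' : Integrable (fun ξ : ℝ × ℝ × ℝ => g ξ.1 ξ.2.1 ξ.2.2) (ρ.prod (ρ.prod ρ)) := by
    have := hint3
    rw [IntegrableOn, Measure.volume_eq_prod, ← Measure.prod_restrict,
      Measure.volume_eq_prod, ← Measure.prod_restrict] at this
    exact this
  have hae : ∀ᵐ ξ1 ∂ρ, Integrable (fun p : ℝ × ℝ => g ξ1 p.1 p.2) (ρ.prod ρ) :=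
    h3'.prod_right_ae
  -- key step: for a.e. ξ1, the inner double integral factorizes
  have key : ∀ᵐ ξ1 ∂ρ,
      (∫ ξ2 in Set.Iic (0:ℝ), ∫ ξ3 in Set.Iic (0:ℝ), g ξ1 ξ2 ξ3)
        = (f1 y ξ1 x * h1 (ξ1 + x)) * C := by
    filter_upwards [hae] with ξ1 hI
    have hswap : (∫ ξ2 in Set.Iic (0:ℝ), ∫ ξ3 in Set.Iic (0:ℝ), g ξ1 ξ2 ξ3)
        = ∫ ξ3 in Set.Iic (0:ℝ), ∫ ξ2 in Set.Iic (0:ℝ), g ξ1 ξ2 ξ3 :=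
      integral_integral_swap hI
    have haeI : ∀ᵐ ξ3 ∂ρ, Integrable (fun ξ2 => g ξ1 ξ2 ξ3) ρ := by
      have := (hI.swap).prod_right_ae
      simpa using this
    have hinner : ∀ᵐ ξ3 ∂ρ,
        (∫ ξ2 in Set.Iic (0:ℝ), g ξ1 ξ2 ξ3)
          = (f1 y ξ1 x * h1 (ξ1 + x)) * (h2 (ξ3 + x) * f2 ξ3 z x) := by
      filter_upwards [haeI] with ξ3 hI2
      -- the function of ξ2 whose derivative is the integrand
      set G : ℝ → ℝ := fun s => f1 y ξ1 x * (h1 (ξ1 + s + x) * h2 (s + ξ3 + x)) * f2 ξ3 z x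
        with hG
      have hderiv : ∀ s ∈ Set.Iic (0:ℝ), HasDerivAt G (g ξ1 s ξ3) s := by
        intro s _
        have base := poppe_aux_hasDerivAt h1 h2 hh1 hh2 (ξ1 + x) (ξ3 + x) s
        have e1 : ∀ u : ℝ, ξ1 + x + u = ξ1 + u + x := fun u => by ring
        have e2 : ∀ u : ℝ, ξ3 + x + u = u + ξ3 + x := fun u => by ring
        simp only [e1, e2] at base
        have base' := (base.const_mul (f1 y ξ1 x)).mul_const (f2 ξ3 z x)
        have hdval : deriv (fun t => h1 (ξ1 + s + t) * h2 (s + ξ3 + t)) x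
            = deriv h1 (ξ1 + s + x) * h2 (s + ξ3 + x)
              + h1 (ξ1 + s + x) * deriv h2 (s + ξ3 + x) :=
          (poppe_aux_hasDerivAt h1 h2 hh1 hh2 (ξ1 + s) (s + ξ3) x).deriv
        rw [hg]
        simp only [hdval]
        exact base'
      have htend : Tendsto G atBot (nhds 0) := by
        have hb1 : Tendsto (fun s : ℝ => ξ1 + s + x) atBot atBot :=
          tendsto_atBot_add_const_right _ x (tendsto_atBot_add_const_left _ ξ1 tendsto_id)
        have hb2 : Tendsto (fun s : ℝ => s + ξ3 + x) atBot atBot :=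
          tendsto_atBot_add_const_right _ x (tendsto_atBot_add_const_right _ ξ3 tendsto_id)
        have t1 : Tendsto (fun s => h1 (ξ1 + s + x)) atBot (nhds 0) := hdecay1.comp hb1
        have t2 : Tendsto (fun s => h2 (s + ξ3 + x)) atBot (nhds 0) := hdecay2.comp hb2
        have := ((t1.mul t2).const_mul (f1 y ξ1 x)).mul_const (f2 ξ3 z x)
        simpa using this
      have hFTC := integral_Iic_of_hasDerivAt_of_tendsto' hderiv hI2 htend
      rw [hFTC, hG]
      simp only [add_zero, zero_add, sub_zero]
      ring
    rw [hswap, integral_congr_ae hinner, integral_const_mul]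
  calc (∫ ξ1 in Set.Iic (0:ℝ), ∫ ξ2 in Set.Iic (0:ℝ), ∫ ξ3 in Set.Iic (0:ℝ), g ξ1 ξ2 ξ3)
      = ∫ ξ1 in Set.Iic (0:ℝ), (f1 y ξ1 x * h1 (ξ1 + x)) * C := integral_congr_ae key
    _ = (∫ ξ in Set.Iic (0:ℝ), f1 y ξ x * h1 (ξ + x)) * C := integral_mul_const _ _
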